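/- Let R be a commutative ring and R' a subring of R with the same identity element 1, with free algebras R⟨X⟩ = R⟨X₁,...,Xₙ⟩ and R'⟨X⟩ = R'⟨X₁,...,Xₙ⟩. For a subset G ⊆ R'⟨X⟩ the following are equivalent: (i) G is an LM-reduced monic Gröbner basis of the ideal I = ⟨G⟩ in R'⟨X⟩ with respect to a monomial ordering ≺ on the standard R'-basis of R'⟨X⟩; (ii) G is an LM-reduced monic Gröbner basis of the ideal J = ⟨G⟩ in R⟨X⟩ with respect to the same monomial ordering ≺ on the standard R-basis of R⟨X⟩. -/

import Mathlib

open scoped Classical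

/-- Words in the alphabet `X₁,...,Xₙ`: the standard basis `B` of monomials of the free algebra. -/
abbrev Word (n : ℕ) : Type := FreeMonoid (Fin n)

/-- The free `R`-algebra `R⟨X₁,...,Xₙ⟩`, realized as the monoid algebra on words. -/
abbrev FreeAlg (R : Type) [CommRing R] (n : ℕ) : Type := MonoidAlgebra R (Word n)

/-- `v` divides `u` as words: `u = w * v * s` for some words `w, s`. -/
def WordDvd {n : ℕ} (v u : Word n) : Prop := ∃ w s : Word n, u = w * v * s

/-- A monomial ordering on the words in `X₁,...,Xₙ`: a well-ordering `≺` such that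
(M1) `u ≺ v` implies `w*u*s ≺ w*v*s`, and (M2) `w = u*v` implies `u ⪯ w` and `v ⪯ w`. -/
structure MonomialOrdering (n : ℕ) where
  lt : Word n → Word n → Prop
  strictTotal : IsStrictTotalOrder (Word n) lt
  wellFounded : WellFounded lt
  mul_compat : ∀ w u v s : Word n, lt u v → lt (w * u * s) (w * v * s)
  factor_le : ∀ u v : Word n, ¬ lt (u * v) u ∧ ¬ lt (u * v) v

namespace MonomialOrdering

/-- `u ⪯ v` for a monomial ordering. -/
def le {n : ℕ} (o : MonomialOrdering n) (u v : Word n) : Prop := u = v ∨ o.lt u v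

end MonomialOrdering

/-- The leading monomial `LM(f)` of `f`: the `≺`-greatest word occurring in `f`
(with junk value `1` if `f = 0`). -/
noncomputable def LM {R : Type} [CommRing R] {n : ℕ} (o : MonomialOrdering n)
    (f : FreeAlg R n) : Word n :=
  if h : ∃ w, w ∈ f.coeff.support ∧ ∀ u ∈ f.coeff.support, o.le u w then h.choose else 1

/-- The leading coefficient `LC(f)` of `f`: the coefficient of `LM(f)` in `f`. -/
noncomputable def LC {R : Type} [CommRing R] {n : ℕ} (o : MonomialOrdering n)
    (f : FreeAlg R n) : R := f.coeff (LM o f)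

/-- A subset `G` is monic if every `g ∈ G` is nonzero with leading coefficient `1`. -/
def IsMonicSet {R : Type} [CommRing R] {n : ℕ} (o : MonomialOrdering n)
    (G : Set (FreeAlg R n)) : Prop := ∀ g ∈ G, g ≠ 0 ∧ LC o g = 1

/-- `G` is a monic Gröbner basis of the two-sided ideal `I`: a monic subset of `I` such that
the leading monomial of every nonzero `f ∈ I` is divisible by `LM(g)` for some `g ∈ G`. -/
def IsMonicGB {R : Type} [CommRing R] {n : ℕ} (o : MonomialOrdering n)
    (G : Set (FreeAlg R n)) (I : TwoSidedIdeal (FreeAlg R n)) : Prop :=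
  (∀ g ∈ G, g ∈ I) ∧ IsMonicSet o G ∧
    ∀ f : FreeAlg R n, f ∈ I → f ≠ 0 → ∃ g ∈ G, WordDvd (LM o g) (LM o f)

/-- The word `u` viewed as a monomial (with coefficient `1`) of the free algebra. -/
noncomputable def mono (R : Type) [CommRing R] {n : ℕ} (u : Word n) : FreeAlg R n :=
  MonoidAlgebra.single u 1

/-- `f` has a Gröbner representation `f = Σ_{i} λ_i u_i g_i v_i` with
`LM(u_i g_i v_i) ⪯ LM(f)` whenever `λ_i ≠ 0`. -/
def HasGroebnerRep {R : Type} [CommRing R] {n : ℕ} (o : MonomialOrdering n)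
    (G : Set (FreeAlg R n)) (f : FreeAlg R n) : Prop :=
  ∃ (m : ℕ) (lam : Fin m → R) (u v : Fin m → Word n) (g : Fin m → FreeAlg R n),
    (∀ i, g i ∈ G) ∧
    f = ∑ i, lam i • (mono R (u i) * g i * mono R (v i)) ∧
    ∀ i, lam i ≠ 0 → o.le (LM o (mono R (u i) * g i * mono R (v i))) (LM o f)

/-- The set `N(G)` of normal words (mod `G`): words divisible by no `LM(g)`, `g ∈ G`. -/
def NSet {R : Type} [CommRing R] {n : ℕ} (o : MonomialOrdering n)
    (G : Set (FreeAlg R n)) : Set (Word n) :=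
  {u : Word n | ∀ g ∈ G, ¬ WordDvd (LM o g) u}

/-- `f` is a normal element (mod `G`): every word occurring in `f` is normal. -/
def IsNormal {R : Type} [CommRing R] {n : ℕ} (o : MonomialOrdering n)
    (G : Set (FreeAlg R n)) (f : FreeAlg R n) : Prop :=
  ∀ u ∈ f.coeff.support, u ∈ NSet o G

/-- `G` is LM-reduced: `LM(g) ∤ LM(g')` for distinct `g, g' ∈ G`. -/
def LMReduced {R : Type} [CommRing R] {n : ℕ} (o : MonomialOrdering n)
    (G : Set (FreeAlg R n)) : Prop :=
  ∀ g ∈ G, ∀ g' ∈ G, g ≠ g' → ¬ WordDvd (LM o g) (LM o g')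

/-- The canonical inclusion `S⟨X₁,...,Xₙ⟩ → T⟨X₁,...,Xₙ⟩` induced by the coefficient
algebra map `S → T`; it sends `Σ λ_u · u` to `Σ λ_u · u` (coefficients mapped along
`algebraMap S T`). -/
noncomputable def coeffIncl (S : Type) [CommRing S] (T : Type) [CommRing T] [Algebra S T]
    (n : ℕ) : FreeAlg S n →ₐ[S] FreeAlg T n :=
  MonoidAlgebra.lift S (FreeAlg T n) (Word n) (MonoidAlgebra.of T (Word n))

section OrderLemmas

variable {n : ℕ} (o : MonomialOrdering n)

theorem MO.lt_trans {u v w : Word n} (h1 : o.lt u v) (h2 : o.lt v w) : o.lt u w := by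
  haveI := o.strictTotal
  exact _root_.trans h1 h2

theorem MO.lt_irrefl (u : Word n) : ¬ o.lt u u := by
  haveI := o.strictTotal
  exact irrefl u

theorem MO.trichotomy (u v : Word n) : o.lt u v ∨ u = v ∨ o.lt v u := by
  haveI := o.strictTotal
  exact trichotomous u v

theorem MO.le_refl (u : Word n) : o.le u u := Or.inl rfl

theorem MO.le_trans {u v w : Word n} (h1 : o.le u v) (h2 : o.le v w) : o.le u w := by
  rcases h1 with rfl | h1
  · exact h2
  rcases h2 with rfl | h2
  · exact Or.inr h1
  · exact Or.inr (MO.lt_trans o h1 h2)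

theorem MO.lt_of_le_of_lt {u v w : Word n} (h1 : o.le u v) (h2 : o.lt v w) : o.lt u w := by
  rcases h1 with rfl | h1
  · exact h2
  · exact MO.lt_trans o h1 h2

theorem MO.lt_of_lt_of_le {u v w : Word n} (h1 : o.lt u v) (h2 : o.le v w) : o.lt u w := by
  rcases h2 with rfl | h2
  · exact h1
  · exact MO.lt_trans o h1 h2

theorem MO.not_lt_of_le {u v : Word n} (h : o.le u v) : ¬ o.lt v u := fun hlt =>
  MO.lt_irrefl o u (MO.lt_of_le_of_lt o h hlt)

theorem MO.le_of_not_lt {u v : Word n} (h : ¬ o.lt v u) : o.le u v := by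
  rcases MO.trichotomy o u v with h1 | rfl | h1
  · exact Or.inr h1
  · exact Or.inl rfl
  · exact absurd h1 h

theorem MO.le_antisymm {u v : Word n} (h1 : o.le u v) (h2 : o.le v u) : u = v := by
  rcases h1 with rfl | h1
  · rfl
  · exact absurd h1 (MO.not_lt_of_le o h2)

theorem MO.le_total (u v : Word n) : o.le u v ∨ o.le v u := by
  rcases MO.trichotomy o u v with h | rfl | h
  · exact Or.inl (Or.inr h)
  · exact Or.inl (Or.inl rfl)
  · exact Or.inr (Or.inr h)

theorem MO.lt_of_le_of_ne {u v : Word n} (h1 : o.le u v) (h2 : u ≠ v) : o.lt u v := by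
  rcases h1 with rfl | h1
  · exact absurd rfl h2
  · exact h1

theorem MO.mul_le (w s : Word n) {u v : Word n} (h : o.le u v) : o.le (w * u * s) (w * v * s) := by
  rcases h with rfl | h
  · exact Or.inl rfl
  · exact Or.inr (o.mul_compat w u v s h)

/-- every nonempty list of words has a maximum. -/
theorem MO.exists_max : ∀ l : List (Word n), l ≠ [] → ∃ m ∈ l, ∀ x ∈ l, o.le x m := by
  intro l
  induction l with
  | nil => intro h; exact absurd rfl h
  | cons a t ih =>
    intro _
    rcases eq_or_ne t [] with rfl | ht
    · exact ⟨a, List.mem_cons_self, by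
        intro x hx
        rcases List.mem_cons.mp hx with rfl | hx
        · exact MO.le_refl o x
        · simp at hx⟩
    · obtain ⟨m, hm, hmax⟩ := ih ht
      rcases MO.le_total o a m with h | h
      · exact ⟨m, List.mem_cons_of_mem _ hm, by
          intro x hx
          rcases List.mem_cons.mp hx with rfl | hx
          · exact h
          · exact hmax x hx⟩
      · exact ⟨a, List.mem_cons_self, by
          intro x hx
          rcases List.mem_cons.mp hx with rfl | hx
          · exact MO.le_refl o x
          · exact MO.le_trans o (hmax x hx) h⟩

end OrderLemmas

section LMLemmas

variable {n : ℕ} (o : MonomialOrdering n) {R : Type} [CommRing R]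

theorem LM_spec {f : FreeAlg R n} (hf : f ≠ 0) :
    LM o f ∈ f.coeff.support ∧ ∀ u ∈ f.coeff.support, o.le u (LM o f) := by
  have hsupp : f.coeff.support ≠ ∅ := by
    simpa [Finsupp.support_eq_empty] using hf
  have hlist : f.coeff.support.toList ≠ [] := by
    simpa [Finset.toList_eq_nil] using hsupp
  obtain ⟨m, hm, hmax⟩ := MO.exists_max o f.coeff.support.toList hlist
  have hex : ∃ w, w ∈ f.coeff.support ∧ ∀ u ∈ f.coeff.support, o.le u w :=
    ⟨m, Finset.mem_toList.mp hm, fun u hu => hmax u (Finset.mem_toList.mpr hu)⟩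
  unfold LM
  rw [dif_pos hex]
  exact hex.choose_spec

theorem LM_mem {f : FreeAlg R n} (hf : f ≠ 0) : LM o f ∈ f.coeff.support := (LM_spec o hf).1

theorem le_LM {f : FreeAlg R n} (hf : f ≠ 0) {u : Word n} (hu : u ∈ f.coeff.support) :
    o.le u (LM o f) := (LM_spec o hf).2 u hu

theorem LM_eq {f : FreeAlg R n} (hf : f ≠ 0) {w : Word n} (h1 : w ∈ f.coeff.support)
    (h2 : ∀ u ∈ f.coeff.support, o.le u w) : LM o f = w :=
  MO.le_antisymm o (h2 _ (LM_mem o hf)) (le_LM o hf h1)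

theorem LC_ne_zero {f : FreeAlg R n} (hf : f ≠ 0) : LC o f ≠ 0 :=
  Finsupp.mem_support_iff.mp (LM_mem o hf)

theorem le_LM_of_apply_ne {f : FreeAlg R n} {u : Word n} (hu : f.coeff u ≠ 0) : o.le u (LM o f) :=
  le_LM o (fun h0 => hu (by simp [h0])) (Finsupp.mem_support_iff.mpr hu)

/-- If every word of `f` is `⪯ w` but `w` itself does not occur, then `LM f ≺ w`. -/
theorem LM_lt_of {f : FreeAlg R n} (hf : f ≠ 0) {w : Word n}
    (h1 : ∀ u ∈ f.coeff.support, o.le u w) (h2 : f.coeff w = 0) : o.lt (LM o f) w := by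
  refine MO.lt_of_le_of_ne o (h1 _ (LM_mem o hf)) (fun he => ?_)
  exact LC_ne_zero o hf (by rw [LC, he, h2])

end LMLemmas
section ShiftLemmas

variable {n : ℕ} (o : MonomialOrdering n) {R : Type} [CommRing R]

theorem shift_inj (u v : Word n) : Function.Injective fun x : Word n => u * x * v :=
  fun x y h => mul_left_cancel (mul_right_cancel h)

theorem mono_mul_mul (f : FreeAlg R n) (u v : Word n) :
    mono R u * f * mono R v = MonoidAlgebra.mapDomain (fun x => u * x * v) f := by
  induction f using MonoidAlgebra.induction_linear with
  | zero => simp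
  | add a b ha hb => rw [mul_add, add_mul, ha, hb, MonoidAlgebra.mapDomain_add]
  | single w c =>
      show MonoidAlgebra.single u (1:R) * MonoidAlgebra.single w c * MonoidAlgebra.single v 1 = _
      rw [MonoidAlgebra.single_mul_single, MonoidAlgebra.single_mul_single, one_mul, mul_one,
        MonoidAlgebra.mapDomain_single]

theorem shift_apply (f : FreeAlg R n) (u v x : Word n) :
    (mono R u * f * mono R v).coeff (u * x * v) = f.coeff x := by
  rw [mono_mul_mul, MonoidAlgebra.coeff_mapDomain, Finsupp.mapDomain_apply (shift_inj u v)]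

theorem shift_support (f : FreeAlg R n) (u v : Word n) :
    (mono R u * f * mono R v).coeff.support = f.coeff.support.map ⟨fun x => u * x * v, shift_inj u v⟩ := by
  rw [mono_mul_mul, MonoidAlgebra.coeff_mapDomain, Finsupp.mapDomain_support_of_injective (shift_inj u v),
    Finset.map_eq_image]
  rfl

theorem shift_ne_zero {f : FreeAlg R n} (hf : f ≠ 0) (u v : Word n) :
    mono R u * f * mono R v ≠ 0 := by
  intro h
  apply hf
  rw [← MonoidAlgebra.coeff_eq_zero, ← Finsupp.support_eq_empty] at h ⊢
  rw [shift_support] at h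
  simpa using h

theorem LM_shift {f : FreeAlg R n} (hf : f ≠ 0) (u v : Word n) :
    LM o (mono R u * f * mono R v) = u * LM o f * v := by
  refine LM_eq o (shift_ne_zero hf u v) ?_ ?_
  · rw [shift_support]
    exact Finset.mem_map.mpr ⟨LM o f, LM_mem o hf, rfl⟩
  · intro w hw
    rw [shift_support] at hw
    obtain ⟨x, hx, rfl⟩ := Finset.mem_map.mp hw
    exact MO.mul_le o u v (le_LM o hf hx)

theorem LC_shift {f : FreeAlg R n} (hf : f ≠ 0) (u v : Word n) :
    LC o (mono R u * f * mono R v) = LC o f := by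
  rw [LC, LM_shift o hf, shift_apply]; rfl

end ShiftLemmas

section CoeffInclLemmas

variable {n : ℕ} (o : MonomialOrdering n) {S T : Type} [CommRing S] [CommRing T] [Algebra S T]

theorem coeffIncl_apply (f : FreeAlg S n) (w : Word n) :
    (coeffIncl S T n f).coeff w = algebraMap S T (f.coeff w) := by
  induction f using MonoidAlgebra.induction_linear with
  | zero => simp
  | add a b ha hb => rw [map_add, MonoidAlgebra.coeff_add, MonoidAlgebra.coeff_add, Finsupp.add_apply, Finsupp.add_apply, ha, hb, map_add]
  | single u c =>
      show (coeffIncl S T n (MonoidAlgebra.single u c)).coeff w = _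
      rw [coeffIncl, MonoidAlgebra.lift_single]
      rw [MonoidAlgebra.coeff_smul_apply]
      show c • ((MonoidAlgebra.single u (1:T)).coeff w) = _
      simp only [MonoidAlgebra.coeff_single, Finsupp.single_apply]
      split
      · rw [Algebra.smul_def, mul_one]
      · rw [smul_zero, map_zero]

theorem coeffIncl_mono (u : Word n) : coeffIncl S T n (mono S u) = mono T u := by
  ext w
  rw [coeffIncl_apply]
  show algebraMap S T ((Finsupp.single u (1:S)) w) = (Finsupp.single u (1:T)) w
  rw [Finsupp.single_apply, Finsupp.single_apply]
  split <;> simp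

variable (hinj : Function.Injective (algebraMap S T))

include hinj in
theorem coeffIncl_support (f : FreeAlg S n) :
    (coeffIncl S T n f).coeff.support = f.coeff.support := by
  ext w
  rw [Finsupp.mem_support_iff, Finsupp.mem_support_iff, coeffIncl_apply]
  constructor
  · intro h h0; exact h (by rw [h0, map_zero])
  · intro h h0; exact h (hinj (by rw [h0, map_zero]))

include hinj in
theorem coeffIncl_injOn : Function.Injective (coeffIncl S T n) := by
  intro f g h
  ext w
  apply hinj
  rw [← coeffIncl_apply, ← coeffIncl_apply, h]

include hinj in
theorem coeffIncl_ne_zero {f : FreeAlg S n} (hf : f ≠ 0) : coeffIncl S T n f ≠ 0 := fun h =>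
  hf (coeffIncl_injOn hinj (by rw [h, map_zero]))

include hinj in
theorem LM_coeffIncl (f : FreeAlg S n) : LM o (coeffIncl S T n f) = LM o f := by
  rcases eq_or_ne f 0 with rfl | hf
  · rw [map_zero]; rfl
  · exact LM_eq o (coeffIncl_ne_zero hinj hf)
      (by rw [coeffIncl_support hinj]; exact LM_mem o hf)
      (by rw [coeffIncl_support hinj]; exact fun u hu => le_LM o hf hu)

include hinj in
theorem LC_coeffIncl (f : FreeAlg S n) : LC o (coeffIncl S T n f) = algebraMap S T (LC o f) := by
  rw [LC, LC, LM_coeffIncl o hinj, coeffIncl_apply]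

theorem coeffIncl_self (f : FreeAlg S n) : coeffIncl S S n f = f := by
  ext w
  rw [coeffIncl_apply]
  simp

end CoeffInclLemmas
section RepSum

variable {n : ℕ} (o : MonomialOrdering n) {S : Type} [CommRing S]
  {A : Type} [CommRing A] [Algebra S A]

/-- A single term `λ • (u · g · v)` of a representation. -/
noncomputable def eterm (S : Type) [CommRing S] (A : Type) [CommRing A] [Algebra S A] {n : ℕ}
    (p : A × Word n × FreeAlg S n × Word n) : FreeAlg A n :=
  p.1 • (mono A p.2.1 * coeffIncl S A n p.2.2.1 * mono A p.2.2.2)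

/-- The sum of the terms of a list representation. -/
noncomputable def repSum (S : Type) [CommRing S] (A : Type) [CommRing A] [Algebra S A] {n : ℕ}
    (L : List (A × Word n × FreeAlg S n × Word n)) : FreeAlg A n :=
  (L.map (eterm S A)).sum

/-- The word `u · LM(g) · v` associated to a term. -/
noncomputable def wordOf {n : ℕ} (o : MonomialOrdering n) {S A : Type} [CommRing S] [CommRing A]
    (p : A × Word n × FreeAlg S n × Word n) : Word n :=
  p.2.1 * LM o p.2.2.1 * p.2.2.2

theorem repSum_nil : repSum S A ([] : List (A × Word n × FreeAlg S n × Word n)) = 0 := rfl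

theorem repSum_cons (p : A × Word n × FreeAlg S n × Word n) (L) :
    repSum S A (p :: L) = eterm S A p + repSum S A L := by
  simp [repSum]

theorem repSum_append (L1 L2 : List (A × Word n × FreeAlg S n × Word n)) :
    repSum S A (L1 ++ L2) = repSum S A L1 + repSum S A L2 := by
  simp [repSum]

theorem repSum_apply (L : List (A × Word n × FreeAlg S n × Word n)) (w : Word n) :
    (repSum S A L).coeff w = (L.map fun p => (eterm S A p).coeff w).sum := by
  induction L with
  | nil => simp [repSum_nil]
  | cons p L ih => rw [repSum_cons, MonoidAlgebra.coeff_add, Finsupp.add_apply, ih, List.map_cons, List.sum_cons]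

theorem repSum_eq_zero {L : List (A × Word n × FreeAlg S n × Word n)}
    (h : ∀ p ∈ L, p.1 = 0) : repSum S A L = 0 := by
  induction L with
  | nil => rfl
  | cons p L ih =>
      rw [repSum_cons, ih fun q hq => h q (List.mem_cons_of_mem _ hq)]
      rw [eterm, h p (List.mem_cons_self), zero_smul, add_zero]

/-- Partition of a list according to a property, compatible with permutation. -/
theorem list_partition {α : Type*} (P : α → Prop) (l : List α) :
    ∃ t r : List α, (∀ x ∈ t, P x) ∧ (∀ x ∈ r, ¬ P x) ∧ (t ++ r).Perm l := by
  induction l with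
  | nil => exact ⟨[], [], by simp, by simp, by simp⟩
  | cons a l ih =>
      obtain ⟨t, r, ht, hr, hperm⟩ := ih
      by_cases hP : P a
      · refine ⟨a :: t, r, ?_, hr, ?_⟩
        · intro x hx
          rcases List.mem_cons.mp hx with rfl | hx
          · exact hP
          · exact ht x hx
        · exact (List.cons_append (a := a) (as := t) (bs := r) ▸ hperm.cons a)
      · refine ⟨t, a :: r, ht, ?_, ?_⟩
        · intro x hx
          rcases List.mem_cons.mp hx with rfl | hx
          · exact hP
          · exact hr x hx
        · exact List.perm_middle.trans (hperm.cons a)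

theorem sum_map_perm {α : Type*} {M : Type*} [AddCommMonoid M] {l1 l2 : List α}
    (h : l1.Perm l2) (f : α → M) : (l1.map f).sum = (l2.map f).sum :=
  (h.map f).sum_eq

variable (hinj : Function.Injective (algebraMap S A))

include hinj in
theorem eterm_support_le {p : A × Word n × FreeAlg S n × Word n} (hg : p.2.2.1 ≠ 0) :
    ∀ q ∈ (eterm S A p).coeff.support, o.le q (wordOf o p) := by
  intro q hq
  have h1 : q ∈ (mono A p.2.1 * coeffIncl S A n p.2.2.1 * mono A p.2.2.2).coeff.support :=
    Finsupp.support_smul hq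
  rw [shift_support, coeffIncl_support hinj] at h1
  obtain ⟨x, hx, rfl⟩ := Finset.mem_map.mp h1
  exact MO.mul_le o _ _ (le_LM o hg hx)

theorem eterm_apply_wordOf (p : A × Word n × FreeAlg S n × Word n) :
    (eterm S A p).coeff (wordOf o p) = p.1 * algebraMap S A (LC o p.2.2.1) := by
  rw [eterm, wordOf, MonoidAlgebra.coeff_smul_apply, shift_apply, coeffIncl_apply, smul_eq_mul]
  rfl

include hinj in
theorem eterm_apply_eq_zero_of_lt {p : A × Word n × FreeAlg S n × Word n} (hg : p.2.2.1 ≠ 0)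
    {q : Word n} (hlt : o.lt (wordOf o p) q) : (eterm S A p).coeff q = 0 := by
  by_contra h
  exact MO.not_lt_of_le o (eterm_support_le o hinj hg q (Finsupp.mem_support_iff.mpr h)) hlt


theorem mono_mul_mono (u v : Word n) : mono A u * mono A v = mono A (u * v) := by
  show MonoidAlgebra.single u (1:A) * MonoidAlgebra.single v (1:A) = MonoidAlgebra.single (u*v) (1:A)
  rw [MonoidAlgebra.single_mul_single, one_mul]

theorem single_eq_smul_mono (u : Word n) (c : A) :
    (MonoidAlgebra.single u c : FreeAlg A n) = c • mono A u := by
  show MonoidAlgebra.single u c = c • MonoidAlgebra.single u (1:A)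
  rw [MonoidAlgebra.smul_single', mul_one]

theorem single_mul_eterm (u : Word n) (c : A) (p : A × Word n × FreeAlg S n × Word n) :
    (MonoidAlgebra.single u c : FreeAlg A n) * eterm S A p
      = eterm S A (c * p.1, (u * p.2.1, p.2.2)) := by
  rw [eterm, eterm]
  show _ = (c * p.1) • (mono A (u * p.2.1) * coeffIncl S A n p.2.2.1 * mono A p.2.2.2)
  rw [single_eq_smul_mono, smul_mul_assoc, mul_smul_comm, smul_smul]
  congr 1
  rw [← mul_assoc, ← mul_assoc, mono_mul_mono]

theorem eterm_mul_single (u : Word n) (c : A) (p : A × Word n × FreeAlg S n × Word n) :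
    eterm S A p * (MonoidAlgebra.single u c : FreeAlg A n)
      = eterm S A (p.1 * c, (p.2.1, p.2.2.1, p.2.2.2 * u)) := by
  rw [eterm, eterm]
  show _ = (p.1 * c) • (mono A p.2.1 * coeffIncl S A n p.2.2.1 * mono A (p.2.2.2 * u))
  rw [single_eq_smul_mono, mul_smul_comm, smul_mul_assoc, smul_smul, mul_comm c p.1]
  congr 1
  rw [mul_assoc, mono_mul_mono]

/-- Every element of the span of `coeffIncl '' G` is a `repSum`. -/
theorem span_rep {G : Set (FreeAlg S n)} {f : FreeAlg A n}
    (hf : f ∈ TwoSidedIdeal.span ((coeffIncl S A n) '' G)) :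
    ∃ L : List (A × Word n × FreeAlg S n × Word n),
      (∀ p ∈ L, p.2.2.1 ∈ G) ∧ f = repSum S A L := by
  set C : Set (FreeAlg A n) :=
    {f | ∃ L : List (A × Word n × FreeAlg S n × Word n),
      (∀ p ∈ L, p.2.2.1 ∈ G) ∧ f = repSum S A L} with hC
  have hzero : (0 : FreeAlg A n) ∈ C := ⟨[], by simp, rfl⟩
  have hadd : ∀ {x y : FreeAlg A n}, x ∈ C → y ∈ C → x + y ∈ C := by
    rintro x y ⟨L1, h1, rfl⟩ ⟨L2, h2, rfl⟩
    refine ⟨L1 ++ L2, ?_, (repSum_append L1 L2).symm⟩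
    intro p hp
    rcases List.mem_append.mp hp with hp | hp
    · exact h1 p hp
    · exact h2 p hp
  have hsmul : ∀ (c : A) {x : FreeAlg A n}, x ∈ C → c • x ∈ C := by
    rintro c x ⟨L, hL, rfl⟩
    refine ⟨L.map fun p => (c * p.1, p.2), ?_, ?_⟩
    · intro p hp
      obtain ⟨q, hq, rfl⟩ := List.mem_map.mp hp
      exact hL q hq
    · induction L with
      | nil => simp [repSum_nil]
      | cons p L ih =>
          rw [List.map_cons, repSum_cons, repSum_cons, smul_add,
            ih (fun q hq => hL q (List.mem_cons_of_mem _ hq))]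
          congr 1
          rw [eterm, eterm, smul_smul]
  have hneg : ∀ {x : FreeAlg A n}, x ∈ C → -x ∈ C := by
    intro x hx
    have := hsmul (-1) hx
    rwa [neg_one_smul] at this
  have hmull : ∀ {x y : FreeAlg A n}, y ∈ C → x * y ∈ C := by
    intro x y hy
    induction x using MonoidAlgebra.induction_linear with
    | zero => rw [zero_mul]; exact hzero
    | add a b ha hb => rw [add_mul]; exact hadd ha hb
    | single u c =>
        obtain ⟨L, hL, rfl⟩ := hy
        refine ⟨L.map fun p => (c * p.1, (u * p.2.1, p.2.2)), ?_, ?_⟩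
        · intro p hp
          obtain ⟨q, hq, rfl⟩ := List.mem_map.mp hp
          exact hL q hq
        · induction L with
          | nil => simp [repSum_nil]
          | cons p L ih =>
              rw [List.map_cons, repSum_cons, repSum_cons, mul_add,
                ih (fun q hq => hL q (List.mem_cons_of_mem _ hq))]
              congr 1
              exact single_mul_eterm u c p
  have hmulr : ∀ {x y : FreeAlg A n}, x ∈ C → x * y ∈ C := by
    intro x y hx
    induction y using MonoidAlgebra.induction_linear with
    | zero => rw [mul_zero]; exact hzero
    | add a b ha hb => rw [mul_add]; exact hadd ha hb
    | single u c =>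
        obtain ⟨L, hL, rfl⟩ := hx
        refine ⟨L.map fun p => (p.1 * c, (p.2.1, p.2.2.1, p.2.2.2 * u)), ?_, ?_⟩
        · intro p hp
          obtain ⟨q, hq, rfl⟩ := List.mem_map.mp hp
          exact hL q hq
        · induction L with
          | nil => simp [repSum_nil]
          | cons p L ih =>
              rw [List.map_cons, repSum_cons, repSum_cons, add_mul,
                ih (fun q hq => hL q (List.mem_cons_of_mem _ hq))]
              congr 1
              exact eterm_mul_single u c p
  have hsub : TwoSidedIdeal.span ((coeffIncl S A n) '' G) ≤
      TwoSidedIdeal.mk' C hzero hadd hneg hmull hmulr := by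
    intro x hx
    rw [TwoSidedIdeal.mem_span_iff] at hx
    exact hx _ (by
      rintro y ⟨g, hg, rfl⟩
      rw [SetLike.mem_coe, TwoSidedIdeal.mem_mk']
      refine ⟨[(1, (1, g, 1))], by simpa using hg, ?_⟩
      show (coeffIncl S A n) g = repSum S A [(1, (1, g, 1))]
      rw [repSum_cons, repSum_nil, add_zero, eterm, one_smul]
      show _ = mono A 1 * (coeffIncl S A n) g * mono A 1
      have h1 : mono A (1 : Word n) = 1 := rfl
      rw [h1, one_mul, mul_one])
  have := hsub hf
  rwa [TwoSidedIdeal.mem_mk'] at this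

end RepSum
section DivisionLemma

variable {n : ℕ} (o : MonomialOrdering n) {S : Type} [CommRing S]

theorem eterm_self (p : S × Word n × FreeAlg S n × Word n) :
    eterm S S p = p.1 • (mono S p.2.1 * p.2.2.1 * mono S p.2.2.2) := by
  rw [eterm, coeffIncl_self]

/-- Division with remainder zero: every element of the span of a monic Gröbner basis has
a representation with all term words bounded by its leading monomial. -/
theorem exists_rep_of_GB {G : Set (FreeAlg S n)} (hmonic : IsMonicSet o G)
    (hGB : ∀ f : FreeAlg S n, f ∈ TwoSidedIdeal.span G → f ≠ 0 →
      ∃ g ∈ G, WordDvd (LM o g) (LM o f)) :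
    ∀ f : FreeAlg S n, f ∈ TwoSidedIdeal.span G → f ≠ 0 →
      ∃ L : List (S × Word n × FreeAlg S n × Word n),
        (∀ p ∈ L, p.2.2.1 ∈ G) ∧ f = repSum S S L ∧
        ∀ p ∈ L, o.le (wordOf o p) (LM o f) := by
  have main : ∀ W : Word n, ∀ f : FreeAlg S n, f ∈ TwoSidedIdeal.span G → f ≠ 0 →
      LM o f = W →
      ∃ L, (∀ p ∈ L, p.2.2.1 ∈ G) ∧ f = repSum S S L ∧
        ∀ p ∈ L, o.le (wordOf o p) (LM o f) := by
    intro W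
    induction W using WellFounded.induction o.wellFounded with
    | _ W ih =>
      intro f hf hf0 hW
      subst hW
      obtain ⟨g, hg, w1, w2, hdvd⟩ := hGB f hf hf0
      obtain ⟨hg0, hgLC⟩ := hmonic g hg
      set t : FreeAlg S n := mono S w1 * g * mono S w2 with ht
      have htI : t ∈ TwoSidedIdeal.span G :=
        TwoSidedIdeal.mul_mem_right _ _ _
          (TwoSidedIdeal.mul_mem_left _ _ _ (TwoSidedIdeal.subset_span hg))
      have hLMt : LM o t = LM o f := by rw [ht, LM_shift o hg0, ← hdvd]
      have htop : t.coeff (LM o f) = 1 := by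
        rw [← hLMt]
        show LC o t = 1
        rw [ht, LC_shift o hg0, hgLC]
      set f' : FreeAlg S n := f - LC o f • t with hf'
      have hf'I : f' ∈ TwoSidedIdeal.span G := by
        rw [hf', Algebra.smul_def]
        exact TwoSidedIdeal.sub_mem _ hf (TwoSidedIdeal.mul_mem_left _ _ _ htI)
      have hbound : ∀ u : Word n, f'.coeff u ≠ 0 → o.le u (LM o f) := by
        intro u hu
        rcases eq_or_ne (f.coeff u) 0 with h1 | h1
        · have h2 : t.coeff u ≠ 0 := by
            intro h2
            apply hu
            rw [hf', MonoidAlgebra.coeff_sub, Finsupp.sub_apply, MonoidAlgebra.coeff_smul, Finsupp.smul_apply, h1, h2, smul_zero, sub_zero]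
          have := le_LM_of_apply_ne o h2
          rwa [hLMt] at this
        · exact le_LM_of_apply_ne o h1
      have hzero : f'.coeff (LM o f) = 0 := by
        rw [hf', MonoidAlgebra.coeff_sub, Finsupp.sub_apply, MonoidAlgebra.coeff_smul, Finsupp.smul_apply, htop, smul_eq_mul, mul_one]
        show LC o f - LC o f = 0
        rw [sub_self]
      have hword : wordOf o (LC o f, (w1, g, w2)) = LM o f := by
        rw [wordOf, ← hdvd]
      rcases eq_or_ne f' 0 with hf'0 | hf'0
      · refine ⟨[(LC o f, (w1, g, w2))], by simpa using hg, ?_, ?_⟩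
        · rw [repSum_cons, repSum_nil, add_zero, eterm_self]
          have : f = LC o f • t := by
            have := sub_eq_zero.mp (hf' ▸ hf'0)
            exact this
          exact this
        · intro p hp
          rcases List.mem_cons.mp hp with rfl | hp
          · rw [hword]; exact MO.le_refl o _
          · simp at hp
      · have hlt : o.lt (LM o f') (LM o f) :=
          LM_lt_of o hf'0 (fun u hu => hbound u (Finsupp.mem_support_iff.mp hu)) hzero
        obtain ⟨L', hL'G, hL'sum, hL'word⟩ := ih (LM o f') hlt f' hf'I hf'0 rfl
        refine ⟨(LC o f, (w1, g, w2)) :: L', ?_, ?_, ?_⟩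
        · intro p hp
          rcases List.mem_cons.mp hp with rfl | hp
          · exact hg
          · exact hL'G p hp
        · rw [repSum_cons, eterm_self, ← hL'sum]
          show f = LC o f • t + f'
          rw [hf', add_sub_cancel]
        · intro p hp
          rcases List.mem_cons.mp hp with rfl | hp
          · rw [hword]; exact MO.le_refl o _
          · exact MO.le_trans o (hL'word p hp) (Or.inr hlt)
  exact fun f hf hf0 => main (LM o f) f hf hf0 rfl

end DivisionLemma
section Transfer

variable {n : ℕ} (o : MonomialOrdering n) {S : Type} [CommRing S]
  {A : Type} [CommRing A] [Algebra S A]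

/-- The monomial-sandwich part of a term, without the coefficient. -/
noncomputable def baseTerm (S : Type) [CommRing S] (A : Type) [CommRing A] [Algebra S A] {n : ℕ}
    (p : A × Word n × FreeAlg S n × Word n) : FreeAlg A n :=
  mono A p.2.1 * coeffIncl S A n p.2.2.1 * mono A p.2.2.2

theorem eterm_eq_smul_base (p : A × Word n × FreeAlg S n × Word n) :
    eterm S A p = p.1 • baseTerm S A p := rfl

/-- The `S`-level version of a base term. -/
noncomputable def sTerm (S : Type) [CommRing S] {A : Type} [CommRing A] {n : ℕ}
    (p : A × Word n × FreeAlg S n × Word n) : FreeAlg S n :=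
  mono S p.2.1 * p.2.2.1 * mono S p.2.2.2

theorem coeffIncl_sTerm (p : A × Word n × FreeAlg S n × Word n) :
    coeffIncl S A n (sTerm S p) = baseTerm S A p := by
  rw [sTerm, baseTerm, map_mul, map_mul, coeffIncl_mono, coeffIncl_mono]

theorem coeffIncl_repSum (L : List (S × Word n × FreeAlg S n × Word n)) :
    coeffIncl S A n (repSum S S L)
      = repSum S A (L.map fun q => (algebraMap S A q.1, q.2)) := by
  induction L with
  | nil => simp [repSum_nil]
  | cons q L ih =>
      rw [repSum_cons, map_add, ih, List.map_cons, repSum_cons]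
      congr 1
      rw [eterm_self, map_smul]
      show q.1 • (coeffIncl S A n) (mono S q.2.1 * q.2.2.1 * mono S q.2.2.2)
          = algebraMap S A q.1 • (mono A q.2.1 * coeffIncl S A n q.2.2.1 * mono A q.2.2.2)
      rw [map_mul, map_mul, coeffIncl_mono, coeffIncl_mono, algebraMap_smul]

theorem smul_repSum (c : A) (L : List (A × Word n × FreeAlg S n × Word n)) :
    c • repSum S A L = repSum S A (L.map fun q => (c * q.1, q.2)) := by
  induction L with
  | nil => simp [repSum_nil]
  | cons q L ih =>
      rw [repSum_cons, List.map_cons, repSum_cons, smul_add, ih]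
      congr 1
      rw [eterm, eterm, smul_smul]

variable (hinj : Function.Injective (algebraMap S A))

include hinj in
theorem exists_rep_diff {G : Set (FreeAlg S n)} (hmonic : IsMonicSet o G)
    (hGB : ∀ f : FreeAlg S n, f ∈ TwoSidedIdeal.span G → f ≠ 0 →
      ∃ g ∈ G, WordDvd (LM o g) (LM o f))
    {w' : Word n} {p q : A × Word n × FreeAlg S n × Word n}
    (hp : p.2.2.1 ∈ G) (hq : q.2.2.1 ∈ G) (hwp : wordOf o p = w') (hwq : wordOf o q = w')
    (c : A) :
    ∃ M : List (A × Word n × FreeAlg S n × Word n),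
      (∀ r ∈ M, r.2.2.1 ∈ G) ∧ repSum S A M = c • (baseTerm S A p - baseTerm S A q) ∧
      ∀ r ∈ M, o.lt (wordOf o r) w' := by
  obtain ⟨hp0, hpLC⟩ := hmonic _ hp
  obtain ⟨hq0, hqLC⟩ := hmonic _ hq
  set d : FreeAlg S n := sTerm S p - sTerm S q with hd
  rcases eq_or_ne d 0 with hd0 | hd0
  · refine ⟨[], by simp, ?_, by simp⟩
    have : baseTerm S A p - baseTerm S A q = 0 := by
      rw [← coeffIncl_sTerm, ← coeffIncl_sTerm, ← map_sub, ← hd, hd0, map_zero]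
    rw [this, smul_zero, repSum_nil]
  · have hdI : d ∈ TwoSidedIdeal.span G := by
      refine TwoSidedIdeal.sub_mem _ ?_ ?_ <;>
        exact TwoSidedIdeal.mul_mem_right _ _ _
          (TwoSidedIdeal.mul_mem_left _ _ _ (TwoSidedIdeal.subset_span (by assumption)))
    -- all words of d are ⪯ w', and w' does not occur in d
    have hpw : ∀ u, (sTerm S p).coeff u ≠ 0 → o.le u w' := by
      intro u hu
      have := le_LM_of_apply_ne o hu
      rw [sTerm] at this
      rwa [LM_shift o hp0, ← wordOf, hwp] at this
    have hqw : ∀ u, (sTerm S q).coeff u ≠ 0 → o.le u w' := by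
      intro u hu
      have := le_LM_of_apply_ne o hu
      rw [sTerm] at this
      rwa [LM_shift o hq0, ← wordOf, hwq] at this
    have hptop : (sTerm S p).coeff w' = 1 := by
      rw [← hwp, wordOf, sTerm, shift_apply]
      exact hpLC
    have hqtop : (sTerm S q).coeff w' = 1 := by
      rw [← hwq, wordOf, sTerm, shift_apply]
      exact hqLC
    have hdlt : o.lt (LM o d) w' := by
      refine LM_lt_of o hd0 ?_ ?_
      · intro u hu
        have := Finsupp.mem_support_iff.mp hu
        rw [hd, MonoidAlgebra.coeff_sub, Finsupp.sub_apply] at this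
        rcases eq_or_ne ((sTerm S p).coeff u) 0 with h1 | h1
        · exact hqw u (fun h2 => this (by rw [h1, h2, sub_zero]))
        · exact hpw u h1
      · rw [hd, MonoidAlgebra.coeff_sub, Finsupp.sub_apply, hptop, hqtop, sub_self]
    obtain ⟨Ld, hLdG, hLdsum, hLdword⟩ := exists_rep_of_GB o hmonic hGB d hdI hd0
    refine ⟨(Ld.map fun r => (algebraMap S A r.1, r.2)).map fun r => (c * r.1, r.2), ?_, ?_, ?_⟩
    · intro r hr
      obtain ⟨r1, hr1, rfl⟩ := List.mem_map.mp hr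
      obtain ⟨r2, hr2, rfl⟩ := List.mem_map.mp hr1
      exact hLdG r2 hr2
    · rw [← smul_repSum, ← coeffIncl_repSum, ← hLdsum]
      congr 1
      rw [← coeffIncl_sTerm, ← coeffIncl_sTerm, ← map_sub]
    · intro r hr
      obtain ⟨r1, hr1, rfl⟩ := List.mem_map.mp hr
      obtain ⟨r2, hr2, rfl⟩ := List.mem_map.mp hr1
      have : wordOf o (c * (algebraMap S A r2.1, r2.2).1, (algebraMap S A r2.1, r2.2).2)
          = wordOf o r2 := rfl
      rw [this]
      exact MO.lt_of_le_of_lt o (hLdword r2 hr2) hdlt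

include hinj in
theorem exists_rep_top {G : Set (FreeAlg S n)} (hmonic : IsMonicSet o G)
    (hGB : ∀ f : FreeAlg S n, f ∈ TwoSidedIdeal.span G → f ≠ 0 →
      ∃ g ∈ G, WordDvd (LM o g) (LM o f))
    {w' : Word n} {q : A × Word n × FreeAlg S n × Word n}
    (hq : q.2.2.1 ∈ G) (hwq : wordOf o q = w') :
    ∀ T : List (A × Word n × FreeAlg S n × Word n),
      (∀ p ∈ T, p.2.2.1 ∈ G ∧ wordOf o p = w') →
      ∃ M : List (A × Word n × FreeAlg S n × Word n),
        (∀ r ∈ M, r.2.2.1 ∈ G) ∧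
        repSum S A M = (T.map fun p => p.1 • (baseTerm S A p - baseTerm S A q)).sum ∧
        ∀ r ∈ M, o.lt (wordOf o r) w' := by
  intro T
  induction T with
  | nil => exact fun _ => ⟨[], by simp, by simp [repSum_nil], by simp⟩
  | cons p T ih =>
      intro hT
      obtain ⟨M1, hM1G, hM1sum, hM1w⟩ := ih fun r hr => hT r (List.mem_cons_of_mem _ hr)
      obtain ⟨hpG, hpw⟩ := hT p (List.mem_cons_self)
      obtain ⟨M0, hM0G, hM0sum, hM0w⟩ :=
        exists_rep_diff o hinj hmonic hGB hpG hq hpw hwq p.1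
      refine ⟨M0 ++ M1, ?_, ?_, ?_⟩
      · intro r hr
        rcases List.mem_append.mp hr with hr | hr
        · exact hM0G r hr
        · exact hM1G r hr
      · rw [repSum_append, hM0sum, hM1sum, List.map_cons, List.sum_cons]
      · intro r hr
        rcases List.mem_append.mp hr with hr | hr
        · exact hM0w r hr
        · exact hM1w r hr

/-- sum of scaled differences plus total coefficient times base equals the sum of terms -/
theorem repSum_top_rewrite (q : A × Word n × FreeAlg S n × Word n) :
    ∀ T : List (A × Word n × FreeAlg S n × Word n),
      repSum S A T = (T.map fun p => p.1 • (baseTerm S A p - baseTerm S A q)).sum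
        + ((T.map fun p => p.1).sum) • baseTerm S A q := by
  intro T
  induction T with
  | nil => simp [repSum_nil]
  | cons p T ih =>
      rw [repSum_cons, ih, List.map_cons, List.sum_cons, List.map_cons, List.sum_cons,
        eterm_eq_smul_base, smul_sub, add_smul]
      abel

include hinj in
theorem GB_transfer {G : Set (FreeAlg S n)} (hmonic : IsMonicSet o G)
    (hGB : ∀ f : FreeAlg S n, f ∈ TwoSidedIdeal.span G → f ≠ 0 →
      ∃ g ∈ G, WordDvd (LM o g) (LM o f)) :
    ∀ W : Word n, ∀ f : FreeAlg A n, f ≠ 0 →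
      ∀ L : List (A × Word n × FreeAlg S n × Word n),
        (∀ p ∈ L, p.2.2.1 ∈ G) → f = repSum S A L →
        (∀ p ∈ L, p.1 ≠ 0 → o.le (wordOf o p) W) →
        ∃ g ∈ G, WordDvd (LM o g) (LM o f) := by
  intro W
  induction W using WellFounded.induction o.wellFounded with
  | _ W ih =>
    intro f hf0 L hLG hLsum hLW
    -- step 1 : drop zero coefficients
    obtain ⟨L1, L0, hL1, hL0, hperm⟩ := list_partition (fun p => p.1 ≠ 0) L
    have hL1L : ∀ p ∈ L1, p ∈ L := fun p hp =>
      hperm.subset (List.mem_append.mpr (Or.inl hp))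
    have hsum1 : f = repSum S A L1 := by
      rw [hLsum, repSum, ← sum_map_perm hperm (eterm S A), List.map_append, List.sum_append]
      have : (L0.map (eterm S A)).sum = 0 := by
        apply List.sum_eq_zero
        intro x hx
        obtain ⟨p, hp, rfl⟩ := List.mem_map.mp hx
        rw [eterm_eq_smul_base, not_not.mp (hL0 p hp), zero_smul]
      rw [this, add_zero]
      rfl
    rcases eq_or_ne L1 [] with rfl | hL1ne
    · exact absurd (by rw [hsum1, repSum_nil]) hf0
    -- step 2 : the maximal word of the representation
    have hmapne : L1.map (wordOf o) ≠ [] := by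
      simpa using hL1ne
    obtain ⟨w', hw'mem, hw'max⟩ := MO.exists_max o (L1.map (wordOf o)) hmapne
    obtain ⟨p₁, hp₁L1, hp₁w⟩ := List.mem_map.mp hw'mem
    have hw'W : o.le w' W := by
      rw [← hp₁w]
      exact hLW p₁ (hL1L p₁ hp₁L1) (hL1 p₁ hp₁L1)
    -- step 3 : split into top part and rest
    obtain ⟨T, Rst, hT, hRst, hperm2⟩ := list_partition (fun p => wordOf o p = w') L1
    have hTL1 : ∀ p ∈ T, p ∈ L1 := fun p hp =>
      hperm2.subset (List.mem_append.mpr (Or.inl hp))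
    have hRstL1 : ∀ p ∈ Rst, p ∈ L1 := fun p hp =>
      hperm2.subset (List.mem_append.mpr (Or.inr hp))
    have hp₁T : p₁ ∈ T := by
      rcases List.mem_append.mp ((hperm2.mem_iff).mpr hp₁L1) with h | h
      · exact h
      · exact absurd hp₁w (hRst p₁ h)
    -- step 4 : the coefficient of f at w'
    have hRstlt : ∀ p ∈ Rst, o.lt (wordOf o p) w' :=
      fun p hp => MO.lt_of_le_of_ne o
        (hw'max _ (List.mem_map_of_mem (f := wordOf o) (hRstL1 p hp))) (hRst p hp)
    have hcoeff : f.coeff w' = (T.map fun p => p.1).sum := by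
      rw [hsum1, repSum_apply, ← sum_map_perm hperm2 (fun p => (eterm S A p).coeff w'),
        List.map_append, List.sum_append]
      have h1 : (Rst.map fun p => (eterm S A p).coeff w').sum = 0 := by
        apply List.sum_eq_zero
        intro x hx
        obtain ⟨p, hp, rfl⟩ := List.mem_map.mp hx
        exact eterm_apply_eq_zero_of_lt o hinj
          (hmonic _ (hLG p (hL1L p (hRstL1 p hp)))).1 (hRstlt p hp)
      have h2 : (T.map fun p => (eterm S A p).coeff w').sum = (T.map fun p => p.1).sum := by
        congr 1
        apply List.map_congr_left
        intro p hp
        rw [← hT p hp, eterm_apply_wordOf, (hmonic _ (hLG p (hL1L p (hTL1 p hp)))).2,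
          map_one, mul_one]
      rw [h1, h2, add_zero]
    rcases eq_or_ne ((T.map fun p => p.1).sum) 0 with hs | hs
    -- step 5a : cancellation at the top word; rewrite and recurse
    · have hTsum : repSum S A T
          = (T.map fun p => p.1 • (baseTerm S A p - baseTerm S A p₁)).sum := by
        rw [repSum_top_rewrite p₁ T, hs, zero_smul, add_zero]
      obtain ⟨M, hMG, hMsum, hMw⟩ := exists_rep_top o hinj hmonic hGB
        (hLG p₁ (hL1L p₁ hp₁L1)) hp₁w T
        (fun p hp => ⟨hLG p (hL1L p (hTL1 p hp)), hT p hp⟩)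
      have hsum2 : f = repSum S A (M ++ Rst) := by
        rw [repSum_append, hMsum, ← hTsum, hsum1, repSum, ← sum_map_perm hperm2 (eterm S A),
          List.map_append, List.sum_append]
        rfl
      have hlt2 : ∀ p ∈ M ++ Rst, o.lt (wordOf o p) w' := by
        intro p hp
        rcases List.mem_append.mp hp with hp | hp
        · exact hMw p hp
        · exact hRstlt p hp
      have hG2 : ∀ p ∈ M ++ Rst, p.2.2.1 ∈ G := by
        intro p hp
        rcases List.mem_append.mp hp with hp | hp
        · exact hMG p hp
        · exact hLG p (hL1L p (hRstL1 p hp))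
      -- drop zeros again and find the new maximal word
      obtain ⟨L2, L2z, hL2, hL2z, hperm3⟩ := list_partition (fun p => p.1 ≠ 0) (M ++ Rst)
      have hL2mem : ∀ p ∈ L2, p ∈ M ++ Rst := fun p hp =>
        hperm3.subset (List.mem_append.mpr (Or.inl hp))
      have hsum3 : f = repSum S A L2 := by
        rw [hsum2, repSum, ← sum_map_perm hperm3 (eterm S A), List.map_append, List.sum_append]
        have : (L2z.map (eterm S A)).sum = 0 := by
          apply List.sum_eq_zero
          intro x hx
          obtain ⟨p, hp, rfl⟩ := List.mem_map.mp hx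
          rw [eterm_eq_smul_base, not_not.mp (hL2z p hp), zero_smul]
        rw [this, add_zero]
        rfl
      rcases eq_or_ne L2 [] with rfl | hL2ne
      · exact absurd (by rw [hsum3, repSum_nil]) hf0
      have hmapne2 : L2.map (wordOf o) ≠ [] := by simpa using hL2ne
      obtain ⟨w2, hw2mem, hw2max⟩ := MO.exists_max o (L2.map (wordOf o)) hmapne2
      obtain ⟨p₂, hp₂L2, hp₂w⟩ := List.mem_map.mp hw2mem
      have hw2lt : o.lt w2 W := by
        rw [← hp₂w]
        exact MO.lt_of_lt_of_le o (hlt2 p₂ (hL2mem p₂ hp₂L2)) hw'W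
      exact ih w2 hw2lt f hf0 L2 (fun p hp => hG2 p (hL2mem p hp)) hsum3
        (fun p hp _ => hw2max _ (List.mem_map_of_mem (f := wordOf o) hp))
    -- step 5b : the top word survives, so it is the leading monomial of f
    · have hw'supp : f.coeff w' ≠ 0 := by rw [hcoeff]; exact hs
      have hLMf : LM o f = w' := by
        refine LM_eq o hf0 (Finsupp.mem_support_iff.mpr hw'supp) ?_
        intro u hu
        have hu' : f.coeff u ≠ 0 := Finsupp.mem_support_iff.mp hu
        rw [hsum1, repSum_apply] at hu'
        have : ∃ p ∈ L1, (eterm S A p).coeff u ≠ 0 := by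
          by_contra h
          push_neg at h
          exact hu' (List.sum_eq_zero fun x hx => by
            obtain ⟨p, hp, rfl⟩ := List.mem_map.mp hx
            exact h p hp)
        obtain ⟨p, hpL1, hpu⟩ := this
        refine MO.le_trans o (eterm_support_le o hinj (hmonic _ (hLG p (hL1L p hpL1))).1 u
          (Finsupp.mem_support_iff.mpr hpu)) (hw'max _ (List.mem_map_of_mem (f := wordOf o) hpL1))
      refine ⟨p₁.2.2.1, hLG p₁ (hL1L p₁ hp₁L1), p₁.2.1, p₁.2.2.2, ?_⟩
      rw [hLMf, ← hp₁w, wordOf]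

end Transfer
section DropZeros

variable {n : ℕ} {S : Type} [CommRing S] {A : Type} [CommRing A] [Algebra S A]

theorem repSum_drop_zeros (L : List (A × Word n × FreeAlg S n × Word n)) :
    ∃ L1, (∀ p ∈ L1, p ∈ L ∧ p.1 ≠ 0) ∧ repSum S A L1 = repSum S A L := by
  obtain ⟨L1, L0, hL1, hL0, hperm⟩ := list_partition (fun p => p.1 ≠ 0) L
  refine ⟨L1, fun p hp => ⟨hperm.subset (List.mem_append.mpr (Or.inl hp)), hL1 p hp⟩, ?_⟩
  rw [repSum, repSum, ← sum_map_perm hperm (eterm S A), List.map_append, List.sum_append]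
  have : (L0.map (eterm S A)).sum = 0 := List.sum_eq_zero fun x hx => by
    obtain ⟨p, hp, rfl⟩ := List.mem_map.mp hx
    rw [eterm_eq_smul_base, not_not.mp (hL0 p hp), zero_smul]
  rw [this, add_zero]

end DropZeros
/-- **Proposition 2.7.**  Let `R` be a commutative ring and `R'` a subring of `R` with the
same identity.  For a subset `G ⊆ R'⟨X₁,...,Xₙ⟩` the following are equivalent: (i) `G` is an
LM-reduced monic Gröbner basis of the ideal `⟨G⟩` in `R'⟨X⟩`; (ii) `G` (viewed in
`R⟨X⟩`) is an LM-reduced monic Gröbner basis of the ideal `⟨G⟩` in `R⟨X⟩`, with respect to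
the same monomial ordering on the (common) set of words. -/
theorem monicGB_subring_iff {R : Type} [CommRing R] {n : ℕ} (o : MonomialOrdering n)
    (R' : Subring R) (G : Set (FreeAlg ↥R' n)) :
    (LMReduced o G ∧ IsMonicGB o G (TwoSidedIdeal.span G)) ↔
      (LMReduced o (⇑(coeffIncl ↥R' R n) '' G) ∧
        IsMonicGB o (⇑(coeffIncl ↥R' R n) '' G)
          (TwoSidedIdeal.span (⇑(coeffIncl ↥R' R n) '' G))) := by
  have hinj : Function.Injective (algebraMap ↥R' R) := fun a b h => Subtype.ext h
  constructor
  · rintro ⟨hred, hGBfull⟩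
    obtain ⟨hmem, hmonic, hGB⟩ := hGBfull
    refine ⟨?_, ?_, ?_, ?_⟩
    · rintro x ⟨g, hg, rfl⟩ y ⟨g', hg', rfl⟩ hne
      rw [LM_coeffIncl o hinj, LM_coeffIncl o hinj]
      exact hred g hg g' hg' (fun h => hne (h ▸ rfl))
    · rintro x ⟨g, hg, rfl⟩
      exact TwoSidedIdeal.subset_span (Set.mem_image_of_mem _ hg)
    · rintro x ⟨g, hg, rfl⟩
      refine ⟨coeffIncl_ne_zero hinj (hmonic g hg).1, ?_⟩
      rw [LC_coeffIncl o hinj, (hmonic g hg).2, map_one]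
    · intro f hf hf0
      obtain ⟨L, hLG, hLsum⟩ := span_rep hf
      obtain ⟨L1, hL1, hL1sum⟩ := repSum_drop_zeros L
      rcases eq_or_ne L1 [] with rfl | hL1ne
      · exact absurd (by rw [hLsum, ← hL1sum, repSum_nil]) hf0
      have hmapne : L1.map (wordOf o) ≠ [] := by simpa using hL1ne
      obtain ⟨w', _, hw'max⟩ := MO.exists_max o (L1.map (wordOf o)) hmapne
      obtain ⟨g, hg, hdvd⟩ := GB_transfer o hinj hmonic hGB w' f hf0 L1
        (fun p hp => hLG p (hL1 p hp).1) (by rw [hLsum, ← hL1sum])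
        (fun p hp _ => hw'max _ (List.mem_map_of_mem (f := wordOf o) hp))
      refine ⟨coeffIncl ↥R' R n g, Set.mem_image_of_mem _ hg, ?_⟩
      rwa [LM_coeffIncl o hinj]
  · rintro ⟨hred, hGBfull⟩
    obtain ⟨hmem, hmonic, hGB⟩ := hGBfull
    refine ⟨?_, ?_, ?_, ?_⟩
    · intro g hg g' hg' hne
      have h1 : coeffIncl ↥R' R n g ≠ coeffIncl ↥R' R n g' :=
        fun h => hne (coeffIncl_injOn hinj h)
      have := hred _ (Set.mem_image_of_mem _ hg) _ (Set.mem_image_of_mem _ hg') h1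
      rwa [LM_coeffIncl o hinj, LM_coeffIncl o hinj] at this
    · exact fun g hg => TwoSidedIdeal.subset_span hg
    · intro g hg
      obtain ⟨h1, h2⟩ := hmonic _ (Set.mem_image_of_mem _ hg)
      refine ⟨fun h => h1 (by rw [h, map_zero]), ?_⟩
      apply hinj
      rw [← LC_coeffIncl o hinj, h2, map_one]
    · intro f hf hf0
      have hcomap : TwoSidedIdeal.span G ≤
          TwoSidedIdeal.comap (coeffIncl ↥R' R n).toRingHom
            (TwoSidedIdeal.span (⇑(coeffIncl ↥R' R n) '' G)) := by
        intro x hx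
        rw [TwoSidedIdeal.mem_span_iff] at hx
        exact hx _ (fun y hy => (TwoSidedIdeal.mem_comap _).mpr
          (TwoSidedIdeal.subset_span (Set.mem_image_of_mem _ hy)))
      have hmemf : coeffIncl ↥R' R n f ∈ TwoSidedIdeal.span (⇑(coeffIncl ↥R' R n) '' G) :=
        (TwoSidedIdeal.mem_comap _).mp (hcomap hf)
      obtain ⟨x, hx, hdvd⟩ := hGB _ hmemf (coeffIncl_ne_zero hinj hf0)
      obtain ⟨g, hg, rfl⟩ := hx
      rw [LM_coeffIncl o hinj, LM_coeffIncl o hinj] at hdvd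
      exact ⟨g, hg, hdvd⟩
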